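/- Let μ be a measure on [0, ∞) with ∫ t dμ(t) < ∞ and such that ∫ t·log t dμ(t) exists in the extended reals (i.e., at least one of the positive/negative parts is finite). Then lim_{M→∞} ∫ t·log((M·t+1)/(M+t)) dμ(t) = ∫ t·log t dμ(t) in the extended reals. -/

import Mathlib

open MeasureTheory Filter
open scoped ENNReal

/-- The extended-real-valued integral of a real function. -/
noncomputable def eIntegral (μ : Measure ℝ) (f : ℝ → ℝ) : EReal :=
  ((∫⁻ t, ENNReal.ofReal (f t) ∂μ : ℝ≥0∞) : EReal) -
    ((∫⁻ t, ENNReal.ofReal (-f t) ∂μ : ℝ≥0∞) : EReal)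

namespace Stmt7Aux

noncomputable def F (M t : ℝ) : ℝ := t * Real.log ((M * t + 1) / (M + t))

lemma num_pos {M t : ℝ} (hM : 1 ≤ M) (ht : 0 ≤ t) : 0 < M * t + 1 := by nlinarith

lemma den_pos {M t : ℝ} (hM : 1 ≤ M) (ht : 0 ≤ t) : 0 < M + t := by linarith

lemma ratio_pos {M t : ℝ} (hM : 1 ≤ M) (ht : 0 ≤ t) : 0 < (M * t + 1) / (M + t) :=
  div_pos (num_pos hM ht) (den_pos hM ht)

lemma F_nonpos {M t : ℝ} (hM : 1 ≤ M) (ht : 0 ≤ t) (ht1 : t ≤ 1) : F M t ≤ 0 := by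
  have h1 : (M * t + 1) / (M + t) ≤ 1 := by
    rw [div_le_one (den_pos hM ht)]; nlinarith
  have := Real.log_nonpos (le_of_lt (ratio_pos hM ht)) h1
  exact mul_nonpos_of_nonneg_of_nonpos ht this

lemma F_nonneg {M t : ℝ} (hM : 1 ≤ M) (ht1 : 1 ≤ t) : 0 ≤ F M t := by
  have ht : (0:ℝ) ≤ t := by linarith
  have h1 : (1:ℝ) ≤ (M * t + 1) / (M + t) := by
    rw [le_div_iff₀ (den_pos hM ht)]; nlinarith
  exact mul_nonneg ht (Real.log_nonneg h1)

lemma mono_pos {M M' t : ℝ} (ht : 0 ≤ t) (hM : 1 ≤ M) (hMM' : M ≤ M') :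
    ENNReal.ofReal (F M t) ≤ ENNReal.ofReal (F M' t) := by
  have hM' : 1 ≤ M' := le_trans hM hMM'
  rcases le_total t 1 with ht1 | ht1
  · rw [ENNReal.ofReal_of_nonpos (F_nonpos hM ht ht1)]; exact zero_le
  · apply ENNReal.ofReal_le_ofReal
    refine mul_le_mul_of_nonneg_left ?_ (by linarith)
    apply Real.log_le_log (ratio_pos hM (by linarith))
    rw [div_le_div_iff₀ (den_pos hM (by linarith)) (den_pos hM' (by linarith))]
    have key : 0 ≤ (M' - M) * (t^2 - 1) := mul_nonneg (by linarith) (by nlinarith)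
    nlinarith [key]

lemma bound_pos {M t : ℝ} (ht : 0 ≤ t) (hM : 1 ≤ M) :
    ENNReal.ofReal (F M t) ≤ ENNReal.ofReal (t * Real.log t) := by
  rcases le_total t 1 with ht1 | ht1
  · rw [ENNReal.ofReal_of_nonpos (F_nonpos hM ht ht1)]; exact zero_le
  · apply ENNReal.ofReal_le_ofReal
    refine mul_le_mul_of_nonneg_left ?_ (by linarith)
    apply Real.log_le_log (ratio_pos hM ht)
    rw [div_le_iff₀ (den_pos hM ht)]; nlinarith

lemma mono_neg {M M' t : ℝ} (ht : 0 ≤ t) (hM : 1 ≤ M) (hMM' : M ≤ M') :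
    ENNReal.ofReal (-(F M t)) ≤ ENNReal.ofReal (-(F M' t)) := by
  have hM' : 1 ≤ M' := le_trans hM hMM'
  rcases le_total t 1 with ht1 | ht1
  · apply ENNReal.ofReal_le_ofReal
    rw [neg_le_neg_iff]
    refine mul_le_mul_of_nonneg_left ?_ ht
    apply Real.log_le_log (ratio_pos hM' ht)
    rw [div_le_div_iff₀ (den_pos hM' ht) (den_pos hM ht)]
    have key : 0 ≤ (M' - M) * (1 - t^2) := mul_nonneg (by linarith) (by nlinarith)
    nlinarith [key]
  · rw [ENNReal.ofReal_of_nonpos (by linarith [F_nonneg hM ht1])]; exact zero_le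

lemma bound_neg {M t : ℝ} (ht : 0 ≤ t) (hM : 1 ≤ M) :
    ENNReal.ofReal (-(F M t)) ≤ ENNReal.ofReal (-(t * Real.log t)) := by
  rcases le_total t 1 with ht1 | ht1
  · apply ENNReal.ofReal_le_ofReal
    rw [neg_le_neg_iff]
    rcases ht.eq_or_lt with h0 | h0
    · simp [F, ← h0]
    · refine mul_le_mul_of_nonneg_left ?_ ht
      apply Real.log_le_log h0
      rw [le_div_iff₀ (den_pos hM ht)]; nlinarith
  · rw [ENNReal.ofReal_of_nonpos (by linarith [F_nonneg hM ht1])]; exact zero_le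

lemma measurable_F (M : ℝ) : Measurable (F M) := by
  apply Measurable.mul measurable_id
  exact Real.measurable_log.comp ((measurable_const.mul measurable_id |>.add measurable_const).div
    (measurable_const.add measurable_id))

lemma tendsto_F (t : ℝ) (ht : 0 ≤ t) :
    Tendsto (fun M : ℝ => F M t) atTop (nhds (t * Real.log t)) := by
  rcases ht.eq_or_lt with h0 | h0
  · simp only [F, ← h0]
    simpa using tendsto_const_nhds
  · have hr : Tendsto (fun M : ℝ => (M * t + 1) / (M + t)) atTop (nhds t) := by
      have h1 : Tendsto (fun M : ℝ => (t + M⁻¹) / (1 + t * M⁻¹)) atTop (nhds t) := by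
        have hnum : Tendsto (fun M : ℝ => t + M⁻¹) atTop (nhds t) := by
          simpa using tendsto_inv_atTop_zero.const_add t
        have hden : Tendsto (fun M : ℝ => 1 + t * M⁻¹) atTop (nhds 1) := by
          simpa using (tendsto_inv_atTop_zero.const_mul t).const_add 1
        have := hnum.div hden one_ne_zero; rwa [div_one] at this
      refine Tendsto.congr' ?_ h1
      filter_upwards [eventually_ge_atTop (1:ℝ)] with M hM
      have hMpos : (0:ℝ) < M := by linarith
      rw [div_eq_div_iff (by positivity : (0:ℝ) < 1 + t * M⁻¹).ne' (den_pos hM ht).ne']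
      field_simp
    have hlog := ((Real.continuousAt_log (ne_of_gt h0)).tendsto).comp hr
    exact hlog.const_mul t

end Stmt7Aux

open Stmt7Aux

theorem stmt_7 (μ : Measure ℝ) (hsupp : μ (Set.Iio 0) = 0)
    (hint : ∫⁻ t, ENNReal.ofReal t ∂μ < ⊤)
    (hex : (∫⁻ t, ENNReal.ofReal (t * Real.log t) ∂μ < ⊤) ∨
           (∫⁻ t, ENNReal.ofReal (-(t * Real.log t)) ∂μ < ⊤)) :
    Tendsto (fun M : ℝ => eIntegral μ (fun t => t * Real.log ((M * t + 1) / (M + t))))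
      atTop (nhds (eIntegral μ (fun t => t * Real.log t))) := by
  have hae : ∀ᵐ t ∂μ, 0 ≤ t := by
    have h : {a : ℝ | ¬ 0 ≤ a} = Set.Iio 0 := by ext a; simp [not_le]
    rw [ae_iff, h]; exact hsupp
  have hnat : Tendsto (fun n : ℕ => (n : ℝ) + 1) atTop atTop :=
    tendsto_atTop_add_const_right atTop 1 tendsto_natCast_atTop_atTop
  have hone : ∀ n : ℕ, (1 : ℝ) ≤ (n : ℝ) + 1 := fun n => by
    have : (0:ℝ) ≤ (n:ℝ) := Nat.cast_nonneg n
    linarith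
  have hmeasP : ∀ M : ℝ, AEMeasurable (fun t => ENNReal.ofReal (F M t)) μ := fun M =>
    (ENNReal.measurable_ofReal.comp (measurable_F M)).aemeasurable
  have hmeasN : ∀ M : ℝ, AEMeasurable (fun t => ENNReal.ofReal (-(F M t))) μ := fun M =>
    (ENNReal.measurable_ofReal.comp (measurable_F M).neg).aemeasurable
  -- positive part
  have hPsup : (∫⁻ t, ENNReal.ofReal (t * Real.log t) ∂μ)
      = ⨆ n : ℕ, ∫⁻ t, ENNReal.ofReal (F ((n:ℝ)+1) t) ∂μ := by
    have hmono : ∀ᵐ t ∂μ, Monotone fun n : ℕ => ENNReal.ofReal (F ((n:ℝ)+1) t) :=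
      hae.mono fun t ht n m hnm =>
        mono_pos ht (hone n) (add_le_add_left (Nat.cast_le.2 hnm) 1)
    have hsup_eq : ∀ᵐ t ∂μ, (⨆ n : ℕ, ENNReal.ofReal (F ((n:ℝ)+1) t))
        = ENNReal.ofReal (t * Real.log t) := hae.mono fun t ht => by
      have hm : Monotone fun n : ℕ => ENNReal.ofReal (F ((n:ℝ)+1) t) := fun n m hnm =>
        mono_pos ht (hone n) (add_le_add_left (Nat.cast_le.2 hnm) 1)
      have htend : Tendsto (fun n : ℕ => ENNReal.ofReal (F ((n:ℝ)+1) t)) atTop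
          (nhds (ENNReal.ofReal (t * Real.log t))) :=
        (ENNReal.continuous_ofReal.tendsto _).comp ((tendsto_F t ht).comp hnat)
      exact tendsto_nhds_unique (tendsto_atTop_iSup hm) htend
    calc (∫⁻ t, ENNReal.ofReal (t * Real.log t) ∂μ)
        = ∫⁻ t, ⨆ n : ℕ, ENNReal.ofReal (F ((n:ℝ)+1) t) ∂μ :=
          (lintegral_congr_ae hsup_eq).symm
      _ = ⨆ n : ℕ, ∫⁻ t, ENNReal.ofReal (F ((n:ℝ)+1) t) ∂μ :=
          lintegral_iSup' (fun n => hmeasP _) hmono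
  have hPle : ∀ M : ℝ, 1 ≤ M → (∫⁻ t, ENNReal.ofReal (F M t) ∂μ)
      ≤ ∫⁻ t, ENNReal.ofReal (t * Real.log t) ∂μ := fun M hM =>
    lintegral_mono_ae (hae.mono fun t ht => bound_pos ht hM)
  have hPmono : ∀ M M' : ℝ, 1 ≤ M → M ≤ M' → (∫⁻ t, ENNReal.ofReal (F M t) ∂μ)
      ≤ ∫⁻ t, ENNReal.ofReal (F M' t) ∂μ := fun M M' hM h =>
    lintegral_mono_ae (hae.mono fun t ht => mono_pos ht hM h)
  have hPtend : Tendsto (fun M : ℝ => ∫⁻ t, ENNReal.ofReal (F M t) ∂μ) atTop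
      (nhds (∫⁻ t, ENNReal.ofReal (t * Real.log t) ∂μ)) := by
    refine tendsto_order.2 ⟨fun a ha => ?_, fun b hb => ?_⟩
    · rw [hPsup] at ha
      obtain ⟨n, hn⟩ := lt_iSup_iff.1 ha
      filter_upwards [eventually_ge_atTop ((n:ℝ)+1)] with M hM
      exact hn.trans_le (hPmono _ _ (hone n) hM)
    · filter_upwards [eventually_ge_atTop (1:ℝ)] with M hM
      exact (hPle M hM).trans_lt hb
  -- negative part
  have hNsup : (∫⁻ t, ENNReal.ofReal (-(t * Real.log t)) ∂μ)
      = ⨆ n : ℕ, ∫⁻ t, ENNReal.ofReal (-(F ((n:ℝ)+1) t)) ∂μ := by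
    have hmono : ∀ᵐ t ∂μ, Monotone fun n : ℕ => ENNReal.ofReal (-(F ((n:ℝ)+1) t)) :=
      hae.mono fun t ht n m hnm =>
        mono_neg ht (hone n) (add_le_add_left (Nat.cast_le.2 hnm) 1)
    have hsup_eq : ∀ᵐ t ∂μ, (⨆ n : ℕ, ENNReal.ofReal (-(F ((n:ℝ)+1) t)))
        = ENNReal.ofReal (-(t * Real.log t)) := hae.mono fun t ht => by
      have hm : Monotone fun n : ℕ => ENNReal.ofReal (-(F ((n:ℝ)+1) t)) := fun n m hnm =>
        mono_neg ht (hone n) (add_le_add_left (Nat.cast_le.2 hnm) 1)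
      have htend : Tendsto (fun n : ℕ => ENNReal.ofReal (-(F ((n:ℝ)+1) t))) atTop
          (nhds (ENNReal.ofReal (-(t * Real.log t)))) :=
        (ENNReal.continuous_ofReal.tendsto _).comp
          (((tendsto_F t ht).neg).comp hnat)
      exact tendsto_nhds_unique (tendsto_atTop_iSup hm) htend
    calc (∫⁻ t, ENNReal.ofReal (-(t * Real.log t)) ∂μ)
        = ∫⁻ t, ⨆ n : ℕ, ENNReal.ofReal (-(F ((n:ℝ)+1) t)) ∂μ :=
          (lintegral_congr_ae hsup_eq).symm
      _ = ⨆ n : ℕ, ∫⁻ t, ENNReal.ofReal (-(F ((n:ℝ)+1) t)) ∂μ :=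
          lintegral_iSup' (fun n => hmeasN _) hmono
  have hNle : ∀ M : ℝ, 1 ≤ M → (∫⁻ t, ENNReal.ofReal (-(F M t)) ∂μ)
      ≤ ∫⁻ t, ENNReal.ofReal (-(t * Real.log t)) ∂μ := fun M hM =>
    lintegral_mono_ae (hae.mono fun t ht => bound_neg ht hM)
  have hNmono : ∀ M M' : ℝ, 1 ≤ M → M ≤ M' → (∫⁻ t, ENNReal.ofReal (-(F M t)) ∂μ)
      ≤ ∫⁻ t, ENNReal.ofReal (-(F M' t)) ∂μ := fun M M' hM h =>
    lintegral_mono_ae (hae.mono fun t ht => mono_neg ht hM h)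
  have hNtend : Tendsto (fun M : ℝ => ∫⁻ t, ENNReal.ofReal (-(F M t)) ∂μ) atTop
      (nhds (∫⁻ t, ENNReal.ofReal (-(t * Real.log t)) ∂μ)) := by
    refine tendsto_order.2 ⟨fun a ha => ?_, fun b hb => ?_⟩
    · rw [hNsup] at ha
      obtain ⟨n, hn⟩ := lt_iSup_iff.1 ha
      filter_upwards [eventually_ge_atTop ((n:ℝ)+1)] with M hM
      exact hn.trans_le (hNmono _ _ (hone n) hM)
    · filter_upwards [eventually_ge_atTop (1:ℝ)] with M hM
      exact (hNle M hM).trans_lt hb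
  -- assemble
  have hEP : Tendsto (fun M : ℝ => ((∫⁻ t, ENNReal.ofReal (F M t) ∂μ : ℝ≥0∞) : EReal)) atTop
      (nhds ((∫⁻ t, ENNReal.ofReal (t * Real.log t) ∂μ : ℝ≥0∞) : EReal)) :=
    EReal.tendsto_coe_ennreal.2 hPtend
  have hEN : Tendsto (fun M : ℝ => -((∫⁻ t, ENNReal.ofReal (-(F M t)) ∂μ : ℝ≥0∞) : EReal)) atTop
      (nhds (-((∫⁻ t, ENNReal.ofReal (-(t * Real.log t)) ∂μ : ℝ≥0∞) : EReal))) :=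
    (EReal.tendsto_coe_ennreal.2 hNtend).neg
  have h1 : ((∫⁻ t, ENNReal.ofReal (t * Real.log t) ∂μ : ℝ≥0∞) : EReal) ≠ ⊤ ∨
      -((∫⁻ t, ENNReal.ofReal (-(t * Real.log t)) ∂μ : ℝ≥0∞) : EReal) ≠ ⊥ := by
    refine hex.imp (fun h => ?_) (fun h => ?_)
    · simp [EReal.coe_ennreal_eq_top_iff, h.ne]
    · simp [EReal.neg_eq_bot_iff, EReal.coe_ennreal_eq_top_iff, h.ne]
  have h2 : ((∫⁻ t, ENNReal.ofReal (t * Real.log t) ∂μ : ℝ≥0∞) : EReal) ≠ ⊥ ∨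
      -((∫⁻ t, ENNReal.ofReal (-(t * Real.log t)) ∂μ : ℝ≥0∞) : EReal) ≠ ⊤ :=
    Or.inl (EReal.coe_ennreal_ne_bot _)
  have hadd := (EReal.continuousAt_add h1 h2).tendsto.comp (hEP.prodMk_nhds hEN)
  simp only [eIntegral, sub_eq_add_neg]
  convert hadd using 2
  rfl
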